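/- Let τ̄ ∈ ℕ and let p, q ∈ (0,1) satisfy p + q < 1. Let (V(k))_{k∈ℕ} be a nonnegative real sequence such that V(k+1) ≤ p·V(k) + q·max{V(ℓ) : max(k−τ̄,0) ≤ ℓ ≤ k} for every k ∈ ℕ. Then V(k) ≤ ρ^k · V(0) for every k ∈ ℕ, where ρ = (p+q)^{1/(1+(1−p)·τ̄)}. -/

import Mathlib

/-- Lemma 5 (Lemma `sequencelemma`) of the paper: a nonnegative sequence satisfying
the delayed recursion `V(k+1) ≤ p·V(k) + q·max_{max(k−τ̄,0) ≤ ℓ ≤ k} V(ℓ)` converges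
linearly with factor `ρ = (p+q)^(1/(1+(1−p)·τ̄))`. -/
theorem stmt_0 (τ : ℕ) (p q : ℝ) (hp : p ∈ Set.Ioo (0:ℝ) 1) (hq : q ∈ Set.Ioo (0:ℝ) 1)
    (hpq : p + q < 1) (V : ℕ → ℝ) (hV : ∀ k, 0 ≤ V k)
    (hrec : ∀ k, V (k + 1) ≤
      p * V k + q * (Finset.Icc (k - τ) k).sup' ⟨k, Finset.mem_Icc.mpr ⟨Nat.sub_le _ _, le_rfl⟩⟩ V) :
    ∀ k, V k ≤ ((p + q) ^ ((1 : ℝ) / (1 + (1 - p) * (τ : ℝ)))) ^ k * V 0 := by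
  obtain ⟨hp0, hp1⟩ := hp
  obtain ⟨hq0, hq1⟩ := hq
  set T : ℝ := (τ : ℝ) with hT
  have hT0 : (0:ℝ) ≤ T := Nat.cast_nonneg τ
  set s : ℝ := p + q with hs
  have hs0 : 0 < s := by positivity
  have hs1 : s < 1 := hpq
  set β : ℝ := 1 + (1 - p) * T with hβ
  have hβ1 : 1 ≤ β := by nlinarith
  have hβ0 : 0 < β := by linarith
  have hβT : β ≤ T + 1 := by nlinarith
  set ρ : ℝ := s ^ ((1:ℝ)/β) with hρ
  have hρ0 : 0 < ρ := Real.rpow_pos_of_pos hs0 _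
  have hρ1 : ρ ≤ 1 := Real.rpow_le_one hs0.le hs1.le (by positivity)
  -- key inequality : p * ρ^τ + q ≤ ρ^(τ+1)
  have key : p * ρ ^ τ + q ≤ ρ ^ (τ + 1) := by
    have ha : ρ ^ (τ + 1) = s ^ ((T + 1)/β) := by
      rw [hρ, ← Real.rpow_natCast (s ^ ((1:ℝ)/β)) (τ+1), ← Real.rpow_mul hs0.le]
      push_cast
      ring_nf
      rfl
    have hb : ρ ^ τ = s ^ (T/β) := by
      rw [hρ, ← Real.rpow_natCast (s ^ ((1:ℝ)/β)) τ, ← Real.rpow_mul hs0.le]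
      ring_nf
      rfl
    rw [ha, hb]
    set X : ℝ := s ^ ((T + 1)/β) with hX
    have hX0 : 0 ≤ X := (Real.rpow_pos_of_pos hs0 _).le
    -- convexity step : s^(T/β) ≤ (T/(T+1)) * X + 1/(T+1)
    have h1 : s ^ (T/β) ≤ (T/(T+1)) * X + (1/(T+1)) * 1 := by
      have := Real.geom_mean_le_arith_mean2_weighted
        (w₁ := T/(T+1)) (w₂ := 1/(T+1)) (p₁ := X) (p₂ := 1)
        (by positivity) (by positivity) hX0 zero_le_one (by field_simp)
      calc s ^ (T/β) = (X) ^ (T/(T+1)) * 1 ^ (1/(T+1)) := by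
            rw [hX, ← Real.rpow_mul hs0.le, Real.one_rpow, mul_one]
            congr 1
            field_simp
        _ ≤ (T/(T+1)) * X + (1/(T+1)) * 1 := this
    -- Bernoulli step : 1 + ((T+1)/β) * (s - 1) ≤ X
    have h2 : 1 + ((T + 1)/β) * (s - 1) ≤ X := by
      have hber := one_add_mul_self_le_rpow_one_add
        (s := s - 1) (by linarith) (p := (T + 1)/β)
        (by rw [le_div_iff₀ hβ0]; linarith)
      simpa [hX] using hber
    -- combine
    set Y : ℝ := s ^ (T/β) with hY
    have hT1 : (0:ℝ) < T + 1 := by linarith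
    have h2' : β + (T + 1) * (s - 1) ≤ β * X := by
      calc β + (T + 1) * (s - 1) = β * (1 + ((T + 1)/β) * (s - 1)) := by
            field_simp
        _ ≤ β * X := mul_le_mul_of_nonneg_left h2 hβ0.le
    have h1' : (T + 1) * Y ≤ T * X + 1 := by
      calc (T + 1) * Y ≤ (T + 1) * (T/(T+1) * X + 1/(T+1) * 1) :=
            mul_le_mul_of_nonneg_left h1 hT1.le
        _ = T * X + 1 := by field_simp
    have h1p : p * ((T + 1) * Y) ≤ p * (T * X + 1) := mul_le_mul_of_nonneg_left h1' hp0.le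
    have hfin : (T + 1) * (p * Y + q) ≤ (T + 1) * X := by nlinarith [h1p, h2']
    exact le_of_mul_le_mul_left hfin hT1
  -- step inequality for every k
  have step : ∀ k : ℕ, p * ρ ^ k + q * ρ ^ (k - τ) ≤ ρ ^ (k + 1) := by
    intro k
    rcases le_or_gt τ k with h | h
    · obtain ⟨m, rfl⟩ : ∃ m, k = τ + m := ⟨k - τ, by omega⟩
      have hm : τ + m - τ = m := by omega
      rw [hm]
      calc p * ρ ^ (τ + m) + q * ρ ^ m = ρ ^ m * (p * ρ ^ τ + q) := by
            rw [pow_add]; ring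
        _ ≤ ρ ^ m * ρ ^ (τ + 1) := mul_le_mul_of_nonneg_left key (pow_nonneg hρ0.le m)
        _ = ρ ^ (τ + m + 1) := by rw [← pow_add]; congr 1; omega
    · have hk : k - τ = 0 := Nat.sub_eq_zero_of_le h.le
      obtain ⟨e, rfl⟩ : ∃ e, τ = k + e := ⟨τ - k, by omega⟩
      rw [hk, pow_zero, mul_one]
      have hpos : 0 < ρ ^ e := pow_pos hρ0 _
      have hchain : ρ ^ e * (p * ρ ^ k + q) ≤ ρ ^ e * ρ ^ (k + 1) := by
        have hρe : ρ ^ e ≤ 1 := pow_le_one₀ hρ0.le hρ1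
        calc ρ ^ e * (p * ρ ^ k + q) = p * ρ ^ (k + e) + q * ρ ^ e := by
              rw [pow_add]; ring
          _ ≤ p * ρ ^ (k + e) + q := by nlinarith
          _ ≤ ρ ^ (k + e + 1) := key
          _ = ρ ^ e * ρ ^ (k + 1) := by rw [← pow_add]; congr 1; omega
      exact le_of_mul_le_mul_left hchain hpos
  -- main induction
  intro k
  induction k using Nat.strong_induction_on with
  | _ k ih =>
    match k with
    | 0 => simp
    | Nat.succ k =>
      have hsup : (Finset.Icc (k - τ) k).sup'
          ⟨k, Finset.mem_Icc.mpr ⟨Nat.sub_le _ _, le_rfl⟩⟩ V ≤ ρ ^ (k - τ) * V 0 := by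
        apply Finset.sup'_le
        intro ℓ hℓ
        obtain ⟨h1, h2⟩ := Finset.mem_Icc.mp hℓ
        calc V ℓ ≤ ρ ^ ℓ * V 0 := ih ℓ (by omega)
          _ ≤ ρ ^ (k - τ) * V 0 :=
            mul_le_mul_of_nonneg_right (pow_le_pow_of_le_one hρ0.le hρ1 h1) (hV 0)
      calc V (k + 1) ≤ p * V k + q * (Finset.Icc (k - τ) k).sup'
            ⟨k, Finset.mem_Icc.mpr ⟨Nat.sub_le _ _, le_rfl⟩⟩ V := hrec k
        _ ≤ p * (ρ ^ k * V 0) + q * (ρ ^ (k - τ) * V 0) := by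
            have hk' := ih k (by omega)
            gcongr
        _ = (p * ρ ^ k + q * ρ ^ (k - τ)) * V 0 := by ring
        _ ≤ ρ ^ (k + 1) * V 0 := mul_le_mul_of_nonneg_right (step k) (hV 0)
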